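/- Let A be an associative ring with identity and P a finitely generated projective left A-module; set Q = P ⊕ A. If Δ ∈ Aut(Q) satisfies Δ(0,1) = (0,1), then Δ factors as Δ = τ·(β ⊕ 1) with τ ∈ ETrans(Q) and β ∈ Aut(P); in particular Δ ∈ Trans(Q)·(Aut(P) ⊕ 1). -/

import Mathlib

open scoped Pointwise

/-- An element `q` of a left `A`-module `M` is unimodular if `Aq ≅ A` and `Aq` is a
direct summand of `M`; equivalently there is a functional `φ : M → A` with `φ q = 1`. -/
def IsUnimodular (A : Type*) [Ring A] {M : Type*} [AddCommGroup M] [Module A M]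
    (q : M) : Prop :=
  ∃ φ : M →ₗ[A] A, φ q = 1

/-- The set of elementary transvections of `M ⊕ A`: the automorphisms
`(p, a) ↦ (p + a • x, a)` for `x : M`, and `(p, a) ↦ (p, a + ψ p)` for `ψ : M → A`. -/
def elemTransvectionSet (A : Type*) [Ring A] (M : Type*) [AddCommGroup M]
    [Module A M] : Set ((M × A) ≃ₗ[A] (M × A)) :=
  {τ | (∃ x : M, ∀ p : M × A, τ p = (p.1 + p.2 • x, p.2)) ∨
       (∃ ψ : M →ₗ[A] A, ∀ p : M × A, τ p = (p.1, p.2 + ψ p.1))}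

/-- The elementary transvection subgroup `ETrans(M ⊕ A)`. -/
def ETrans (A : Type*) [Ring A] (M : Type*) [AddCommGroup M] [Module A M] :
    Subgroup ((M × A) ≃ₗ[A] (M × A)) :=
  Subgroup.closure (elemTransvectionSet A M)

/-- The set of transvections of a module `M`: automorphisms `p ↦ p + φ(p) • q` with
`φ q = 0` and `q` unimodular in `M` or `φ` unimodular in `M*`. -/
def transvectionSet (A : Type*) [Ring A] (M : Type*) [AddCommGroup M] [Module A M] :
    Set (M ≃ₗ[A] M) :=
  {τ | ∃ (q : M) (φ : M →ₗ[A] A), φ q = 0 ∧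
        (IsUnimodular A q ∨ ∃ x : M, φ x = 1) ∧ ∀ p : M, τ p = p + φ p • q}

/-- The transvection subgroup `Trans(M)` of `Aut(M)`. -/
def TransGroup (A : Type*) [Ring A] (M : Type*) [AddCommGroup M] [Module A M] :
    Subgroup (M ≃ₗ[A] M) :=
  Subgroup.closure (transvectionSet A M)

/-- If an automorphism `Δ` of `Q = P ⊕ A` fixes the unimodular element `(0, 1)`,
then `Δ = τ · (β ⊕ 1)` with `τ` in the elementary transvection subgroup `ETrans(Q)`
and `β ∈ Aut(P)`; in particular `Δ ∈ Trans(Q) · (Aut(P) ⊕ 1)`. -/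
theorem factor_of_fixes_unimodular
    (A : Type*) [Ring A] (P : Type*) [AddCommGroup P] [Module A P]
    [Module.Finite A P] [Module.Projective A P]
    (Δ : (P × A) ≃ₗ[A] (P × A)) (hΔ : Δ ((0 : P), (1 : A)) = ((0 : P), (1 : A))) :
    ∃ τ ∈ ETrans A P, ∃ β : P ≃ₗ[A] P,
      (Δ = τ * (β.prodCongr (LinearEquiv.refl A A)) ∧
        Δ ∈ (TransGroup A (P × A) : Set ((P × A) ≃ₗ[A] (P × A))) *
          ((fun β : P ≃ₗ[A] P => β.prodCongr (LinearEquiv.refl A A)) '' Set.univ)) := by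
  classical
  have hsymm : Δ.symm ((0 : P), (1 : A)) = ((0 : P), (1 : A)) := by
    conv_lhs => rw [← hΔ, Δ.symm_apply_apply]
  set B : P →ₗ[A] P :=
    (LinearMap.fst A P A) ∘ₗ (Δ : P × A →ₗ[A] P × A) ∘ₗ LinearMap.inl A P A with hBdef
  set ψ : P →ₗ[A] A :=
    (LinearMap.snd A P A) ∘ₗ (Δ : P × A →ₗ[A] P × A) ∘ₗ LinearMap.inl A P A with hψdef
  set B' : P →ₗ[A] P :=
    (LinearMap.fst A P A) ∘ₗ (Δ.symm : P × A →ₗ[A] P × A) ∘ₗ LinearMap.inl A P A with hB'def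
  set ψ' : P →ₗ[A] A :=
    (LinearMap.snd A P A) ∘ₗ (Δ.symm : P × A →ₗ[A] P × A) ∘ₗ LinearMap.inl A P A with hψ'def
  have hΔapp : ∀ (p : P) (a : A), Δ (p, a) = (B p, a + ψ p) := by
    intro p a
    have h1 : (p, a) = (p, (0 : A)) + a • ((0 : P), (1 : A)) := by simp
    have h2 : Δ (p, (0 : A)) = (B p, ψ p) := rfl
    rw [h1, map_add, map_smul, hΔ, h2]
    ext <;> simp [add_comm]
  have hΔ'app : ∀ (p : P) (a : A), Δ.symm (p, a) = (B' p, a + ψ' p) := by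
    intro p a
    have h1 : (p, a) = (p, (0 : A)) + a • ((0 : P), (1 : A)) := by simp
    have h2 : Δ.symm (p, (0 : A)) = (B' p, ψ' p) := rfl
    rw [h1, map_add, map_smul, hsymm, h2]
    ext <;> simp [add_comm]
  have hBB' : ∀ p : P, B (B' p) = p := by
    intro p
    have := Δ.apply_symm_apply (p, (0 : A))
    rw [hΔ'app, hΔapp] at this
    exact congrArg Prod.fst this
  have hB'B : ∀ p : P, B' (B p) = p := by
    intro p
    have := Δ.symm_apply_apply (p, (0 : A))
    rw [hΔapp, hΔ'app] at this
    exact congrArg Prod.fst this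
  set β : P ≃ₗ[A] P :=
    LinearEquiv.ofLinear B B' (LinearMap.ext hBB') (LinearMap.ext hB'B) with hβdef
  set ψτ : P →ₗ[A] A := ψ ∘ₗ B' with hψτdef
  set τ : (P × A) ≃ₗ[A] (P × A) :=
    LinearEquiv.ofLinear
      (LinearMap.prod (LinearMap.fst A P A)
        (LinearMap.snd A P A + ψτ ∘ₗ LinearMap.fst A P A))
      (LinearMap.prod (LinearMap.fst A P A)
        (LinearMap.snd A P A - ψτ ∘ₗ LinearMap.fst A P A))
      (by ext x <;> simp) (by ext x <;> simp) with hτdef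
  have hτapp : ∀ p : P × A, τ p = (p.1, p.2 + ψτ p.1) := fun p => rfl
  have hτE : τ ∈ ETrans A P :=
    Subgroup.subset_closure (Or.inr ⟨ψτ, hτapp⟩)
  have hfac : Δ = τ * (β.prodCongr (LinearEquiv.refl A A)) := by
    apply LinearEquiv.toLinearMap_injective
    apply LinearMap.ext
    rintro ⟨p, a⟩
    show Δ (p, a) = τ ((β.prodCongr (LinearEquiv.refl A A)) (p, a))
    have : (β.prodCongr (LinearEquiv.refl A A)) (p, a) = (B p, a) := rfl
    rw [this, hτapp, hΔapp]
    simp [hψτdef, hB'B]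
  refine ⟨τ, hτE, β, hfac, ?_⟩
  have hτT : τ ∈ TransGroup A (P × A) := by
    apply Subgroup.subset_closure
    refine ⟨((0 : P), (1 : A)), ψτ ∘ₗ LinearMap.fst A P A, by simp, ?_, ?_⟩
    · exact Or.inl ⟨LinearMap.snd A P A, by simp⟩
    · intro p
      rw [hτapp]
      ext <;> simp
  rw [hfac]
  exact Set.mul_mem_mul hτT ⟨β, Set.mem_univ β, rfl⟩
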